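/- Let Δ ∈ (0, π/2), η > 0, a ∈ ℝ, b ∈ (a, ∞], h : [a,b) → ℝ and φ : (a,b) → ℂ with: h(x) > h(a) for all x ∈ (a,b) and for every δ > 0 the infimum of h(x) − h(a) over [a+δ, b) is positive; and there is ω₀ > 0 such that ∫ₐᵇ |φ(x)| e^{−z h(x)} dx < ∞ for all real z ≥ ω₀. Then there exists δ₀ > 0 such that for every matrix A ∈ ℂ^{m×m} with σ(A) ⊆ {z ∈ ℂ : z ≠ 0 and |arg z| ≤ π/2 − Δ}, μ(A) ≥ η·ω(A), and ‖A⁻¹‖ ≤ δ₀, the integral ∫ₐᵇ φ(x) e^{−h(x)A} dx converges absolutely, i.e. ∫ₐᵇ |φ(x)| ‖e^{−h(x)A}‖ dx < ∞. -/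

import Mathlib

open MeasureTheory Matrix
open scoped Matrix.Norms.L2Operator

noncomputable section

/-- Square complex matrices, with the operator 2-norm (scoped `Matrix.L2OpNorm`). -/
abbrev Mat (m : ℕ) := Matrix (Fin m) (Fin m) ℂ

instance {m : ℕ} : CStarAlgebra (Mat m) where

/-- `ω(A)`: the minimum of the real parts of the eigenvalues of `A`. -/
def omegaA {m : ℕ} (A : Mat m) : ℝ := sInf (Complex.re '' spectrum ℂ A)

/-- `μ(A)`: the minimum eigenvalue of the Hermitian matrix `A⁺ = (A + Aᴴ)/2`. -/
def muA {m : ℕ} (A : Mat m) : ℝ :=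
  sInf {x : ℝ | (x : ℂ) ∈ spectrum ℂ ((1 / 2 : ℂ) • (A + Aᴴ))}

/-- The fractional negative power `A^{-α} = Γ(α)⁻¹ ∫₀^∞ t^{α-1} e^{-tA} dt`. -/
def negPow {m : ℕ} (A : Mat m) (α : ℝ) : Mat m :=
  (Real.Gamma α)⁻¹ • ∫ t in Set.Ioi (0 : ℝ), t ^ (α - 1) • NormedSpace.exp ((-(t : ℂ)) • A)

section Aux

open NormedSpace

local notation "⟪" x ", " y "⟫" => @inner ℂ _ _ x y

/-- Semigroup bound: if the (real part of the) quadratic form of `T` is bounded below by `μ`,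
then `‖e^{-sT}‖ ≤ e^{-sμ}` for `s ≥ 0`. -/
lemma norm_exp_neg_smul_le {E : Type*} [NormedAddCommGroup E] [InnerProductSpace ℂ E]
    [CompleteSpace E] (T : E →L[ℂ] E) (μ : ℝ)
    (hT : ∀ x : E, μ * ‖x‖ ^ 2 ≤ (⟪T x, x⟫).re) {s : ℝ} (hs : 0 ≤ s) :
    ‖NormedSpace.exp ((-(s : ℂ)) • T)‖ ≤ Real.exp (-(s * μ)) := by
  set B : E →L[ℂ] E := -T with hB
  refine ContinuousLinearMap.opNorm_le_bound _ (Real.exp_nonneg _) fun x => ?_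
  have hcurve : ∀ t : ℝ, HasDerivAt (fun t : ℝ => exp ((t : ℂ) • B))
      (B * exp ((t : ℂ) • B)) t := by
    intro t
    have h1 : HasDerivAt (fun z : ℂ => exp (z • B)) (B * exp ((t : ℂ) • B)) (t : ℂ) :=
      hasDerivAt_exp_smul_const' B (t : ℂ)
    have h2 : HasDerivAt (fun t : ℝ => (t : ℂ)) 1 t := by
      exact Complex.ofRealCLM.hasDerivAt (x := t)
    exact (h1.scomp t h2).congr_deriv (one_smul _ _)
  set u : ℝ → E := fun t => exp ((t : ℂ) • B) x with hu
  have hder : ∀ t : ℝ, HasDerivAt u (B (u t)) t := by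
    intro t
    have happ := ((ContinuousLinearMap.apply ℂ E x).restrictScalars ℝ).hasFDerivAt.comp_hasDerivAt
      t (hcurve t)
    exact happ
  set f : ℝ → ℝ := fun t => (⟪u t, u t⟫).re with hf
  have hfder : ∀ t : ℝ, HasDerivAt f ((⟪u t, B (u t)⟫ + ⟪B (u t), u t⟫).re) t := fun t =>
    Complex.reCLM.hasFDerivAt.comp_hasDerivAt t ((hder t).inner ℂ (hder t))
  have hfval : ∀ t, f t = ‖u t‖ ^ 2 := fun t => by
    show (⟪u t, u t⟫).re = _; exact inner_self_eq_norm_sq (𝕜 := ℂ) (u t)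
  have hfder_le : ∀ t : ℝ, (⟪u t, B (u t)⟫ + ⟪B (u t), u t⟫).re ≤ -2 * μ * f t := by
    intro t
    have h1 : (⟪u t, B (u t)⟫ + ⟪B (u t), u t⟫).re = 2 * (⟪B (u t), u t⟫).re := by
      have hcs : (⟪u t, B (u t)⟫).re = (⟪B (u t), u t⟫).re := by
        simpa using inner_re_symm (𝕜 := ℂ) (u t) (B (u t))
      rw [Complex.add_re, hcs]
      ring
    have h2 : (⟪B (u t), u t⟫).re = -(⟪T (u t), u t⟫).re := by
      simp [hB]
    have h3 := hT (u t)
    rw [h1, h2, hfval]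
    nlinarith [h3]
  set g : ℝ → ℝ := fun t => f t * Real.exp (2 * μ * t) with hg
  have hgder : ∀ t : ℝ, HasDerivAt g
      ((⟪u t, B (u t)⟫ + ⟪B (u t), u t⟫).re * Real.exp (2 * μ * t)
        + f t * (Real.exp (2 * μ * t) * (2 * μ))) t := by
    intro t
    have he : HasDerivAt (fun t : ℝ => Real.exp (2 * μ * t))
        (Real.exp (2 * μ * t) * (2 * μ)) t := by
      simpa using ((hasDerivAt_id t).const_mul (2 * μ)).exp
    exact (hfder t).mul he
  have hganti : Antitone g := by
    apply antitone_of_deriv_nonpos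
    · exact fun t => (hgder t).differentiableAt
    · intro t
      rw [(hgder t).deriv]
      have he : (0:ℝ) < Real.exp (2 * μ * t) := Real.exp_pos _
      nlinarith [hfder_le t, he]
  have hkey : f s * Real.exp (2 * μ * s) ≤ ‖x‖ ^ 2 := by
    have := hganti hs
    simpa [hg, hfval, hu] using this
  have hfs : ‖u s‖ ^ 2 ≤ (Real.exp (-(s * μ)) * ‖x‖) ^ 2 := by
    rw [← hfval]
    have he : (0:ℝ) < Real.exp (2 * μ * s) := Real.exp_pos _
    rw [mul_pow, ← Real.exp_nat_mul]
    have : Real.exp ((2:ℕ) * -(s * μ)) = (Real.exp (2 * μ * s))⁻¹ := by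
      rw [← Real.exp_neg]; ring_nf
    rw [this]
    rw [← le_div_iff₀ he] at hkey
    simpa [div_eq_mul_inv, mul_comm] using hkey
  have := Real.sqrt_le_sqrt hfs
  rw [Real.sqrt_sq (norm_nonneg _), Real.sqrt_sq (by positivity)] at this
  have hrw : exp ((-(s : ℂ)) • T) x = u s := by
    simp [hu, hB]
  rw [hrw]
  exact this

open scoped ComplexOrder in
/-- The quadratic form of `A` is bounded below by `μ(A)`. -/
lemma muA_le_quad {m : ℕ} (A : Mat m) (x : EuclideanSpace ℂ (Fin m)) :
    muA A * ‖x‖ ^ 2 ≤ (⟪(toEuclideanCLM (n := Fin m) (𝕜 := ℂ) A) x, x⟫).re := by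
  classical
  set H : Mat m := (1 / 2 : ℂ) • (A + Aᴴ) with hHdef
  have hH : H.IsHermitian := by
    unfold Matrix.IsHermitian
    rw [hHdef, conjTranspose_smul, conjTranspose_add, conjTranspose_conjTranspose, add_comm]
    congr 1
    simp
  have hset : {y : ℝ | (y : ℂ) ∈ spectrum ℂ H} = Set.range hH.eigenvalues := by
    ext y
    rw [Set.mem_setOf_eq, show ((y : ℂ)) = algebraMap ℝ ℂ y from rfl,
      spectrum.algebraMap_mem_iff, hH.spectrum_real_eq_range_eigenvalues]
  have hmule : ∀ i, muA A ≤ hH.eigenvalues i := by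
    intro i
    have : muA A = sInf (Set.range hH.eigenvalues) := by rw [muA, ← hset, hHdef]
    rw [this]
    exact csInf_le (Set.finite_range _).bddBelow ⟨i, rfl⟩
  set μ := muA A with hμ
  set U : Mat m := (hH.eigenvectorUnitary : Mat m) with hU
  have hUU : U * star U = 1 := Matrix.mem_unitaryGroup_iff.mp hH.eigenvectorUnitary.2
  have key : H - (μ : ℂ) • 1 =
      U * diagonal (fun i => ((hH.eigenvalues i - μ : ℝ) : ℂ)) * star U := by
    conv_lhs => rw [hH.spectral_theorem, Unitary.conjStarAlgAut_apply]
    have h1 : (μ : ℂ) • (1 : Mat m) = U * ((μ : ℂ) • 1) * star U := by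
      rw [mul_smul_comm, mul_one, smul_mul_assoc, hUU]
    rw [h1, ← sub_mul, ← mul_sub, smul_one_eq_diagonal, diagonal_sub]
    congr 1
    congr 1
    funext i
    push_cast
    simp
  have hpsd : (H - (μ : ℂ) • 1).PosSemidef := by
    rw [key]
    refine (posSemidef_diagonal_iff.mpr fun i => ?_).mul_mul_conjTranspose_same U
    exact Complex.zero_le_real.mpr (by linarith [hmule i])
  set v : Fin m → ℂ := WithLp.equiv 2 (Fin m → ℂ) x with hv
  have hquad := hpsd.dotProduct_mulVec_nonneg v
  set c : ℂ := star v ⬝ᵥ (A *ᵥ v) with hc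
  have hstarc : star c = star v ⬝ᵥ (Aᴴ *ᵥ v) := by
    rw [hc, star_dotProduct, star_star, star_mulVec]
    exact (dotProduct_mulVec _ _ _).symm
  have e1 : star v ⬝ᵥ (H *ᵥ v) = (1 / 2 : ℂ) * (c + star c) := by
    rw [hHdef, smul_mulVec, dotProduct_smul, add_mulVec, dotProduct_add, hstarc]
    simp [smul_eq_mul, hc]
  have e2 : star v ⬝ᵥ (((μ : ℂ) • 1) *ᵥ v) = (μ : ℂ) * (star v ⬝ᵥ v) := by
    rw [smul_mulVec, one_mulVec, dotProduct_smul, smul_eq_mul]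
  have e3 : (star v ⬝ᵥ v).re = ‖x‖ ^ 2 := by
    have : star v ⬝ᵥ v = inner (𝕜 := ℂ) x x := by
      rw [EuclideanSpace.inner_eq_star_dotProduct, dotProduct_comm]; rfl
    rw [this]
    simpa using inner_self_eq_norm_sq (𝕜 := ℂ) x
  have hre : 0 ≤ (star v ⬝ᵥ ((H - (μ : ℂ) • 1) *ᵥ v)).re := (Complex.le_def.mp hquad).1
  rw [sub_mulVec, dotProduct_sub, Complex.sub_re, e1, e2] at hre
  have hcre : ((1 / 2 : ℂ) * (c + star c)).re = c.re := by
    have : (star c).re = c.re := by simp [Complex.star_def]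
    simp [Complex.mul_re, Complex.add_re, Complex.add_im, this, Complex.star_def]
    ring
  have hμre : ((μ : ℂ) * (star v ⬝ᵥ v)).re = μ * ‖x‖ ^ 2 := by
    rw [Complex.re_ofReal_mul, e3]
  rw [hcre, hμre] at hre
  have hgoal : (⟪(toEuclideanCLM (n := Fin m) (𝕜 := ℂ) A) x, x⟫).re = c.re := by
    have hsymm := inner_re_symm (𝕜 := ℂ) ((toEuclideanCLM (n := Fin m) (𝕜 := ℂ) A) x) x
    have hval : inner (𝕜 := ℂ) x ((toEuclideanCLM (n := Fin m) (𝕜 := ℂ) A) x) = c := by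
      rw [EuclideanSpace.inner_eq_star_dotProduct, hc, ofLp_toEuclideanCLM, dotProduct_comm]
      rfl
    rw [hval] at hsymm
    simpa using hsymm
  rw [hgoal]
  linarith

/-- The matrix exponential bound `‖e^{-sA}‖ ≤ e^{-s μ(A)}` for `s ≥ 0`. -/
lemma norm_exp_matrix_le {m : ℕ} (A : Mat m) {s : ℝ} (hs : 0 ≤ s) :
    ‖NormedSpace.exp ((-(s : ℂ)) • A)‖ ≤ Real.exp (-(s * muA A)) := by
  have hcont : Continuous (toEuclideanCLM (n := Fin m) (𝕜 := ℂ)) :=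
    LinearMap.continuous_of_finiteDimensional
      (toEuclideanCLM (n := Fin m) (𝕜 := ℂ)).toAlgEquiv.toLinearEquiv.toLinearMap
  have h1 : ‖NormedSpace.exp ((-(s : ℂ)) • A)‖
      = ‖NormedSpace.exp ((-(s : ℂ)) • toEuclideanCLM (n := Fin m) (𝕜 := ℂ) A)‖ := by
    letI : NormedAlgebra ℚ (Mat m) := NormedAlgebra.restrictScalars ℚ ℂ (Mat m)
    rw [Matrix.cstar_norm_def, map_exp _ hcont, _root_.map_smul]
  rw [h1]
  exact norm_exp_neg_smul_le _ _ (muA_le_quad A) hs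

/-- Splitting bound: `‖e^{-tA}‖ ≤ ‖e^{-rA}‖ e^{-(t-r)μ(A)}` for `t ≥ r`. -/
lemma norm_exp_matrix_split {m : ℕ} (A : Mat m) {t r : ℝ} (htr : r ≤ t) :
    ‖NormedSpace.exp ((-(t : ℂ)) • A)‖
      ≤ ‖NormedSpace.exp ((-(r : ℂ)) • A)‖ * Real.exp (-((t - r) * muA A)) := by
  have hsplit : (-(t : ℂ)) • A = (-(((t - r : ℝ)) : ℂ)) • A + (-(r : ℂ)) • A := by
    rw [← add_smul]
    push_cast
    ring_nf
  have hcomm : Commute ((-(((t - r : ℝ)) : ℂ)) • A) ((-(r : ℂ)) • A) :=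
    ((Commute.refl A).smul_left _).smul_right _
  letI : NormedAlgebra ℚ (Mat m) := NormedAlgebra.restrictScalars ℚ ℂ (Mat m)
  rw [hsplit, NormedSpace.exp_add_of_commute hcomm]
  calc ‖exp ((-(((t - r : ℝ)) : ℂ)) • A) * exp ((-(r : ℂ)) • A)‖
      ≤ ‖exp ((-(((t - r : ℝ)) : ℂ)) • A)‖ * ‖exp ((-(r : ℂ)) • A)‖ := norm_mul_le _ _
    _ ≤ Real.exp (-((t - r) * muA A)) * ‖exp ((-(r : ℂ)) • A)‖ := by
        gcongr
        exact norm_exp_matrix_le A (by linarith)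
    _ = _ := mul_comm _ _

end Aux

/-- Absolute convergence of the matrix Laplace integral (well-definedness claim in
Theorem 2.1 of the paper). -/
theorem laplace_integral_abs_convergent
    (Δ η : ℝ) (hΔ : 0 < Δ) (hΔ' : Δ < Real.pi / 2) (hη : 0 < η)
    (a : ℝ) (b : EReal) (hab : (a : EReal) < b)
    (h : ℝ → ℝ) (φ : ℝ → ℂ)
    -- condition (i)
    (hi1 : ∀ x : ℝ, a < x → (x : EReal) < b → h a < h x)
    (hi2 : ∀ δ > (0 : ℝ), ∃ ε > (0 : ℝ), ∀ x : ℝ, a + δ ≤ x → (x : EReal) < b → ε ≤ h x - h a)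
    -- condition (iv)
    (ω₀ : ℝ) (hω₀ : 0 < ω₀)
    (hiv : ∀ z : ℝ, ω₀ ≤ z →
      IntegrableOn (fun x => ‖φ x‖ * Real.exp (-z * h x))
        {x : ℝ | a < x ∧ (x : EReal) < b})
    (m : ℕ) :
    ∃ δ₀ > (0 : ℝ), ∀ A : Mat m,
      (∀ z ∈ spectrum ℂ A, z ≠ 0 ∧ |Complex.arg z| ≤ Real.pi / 2 - Δ) →
      η * omegaA A ≤ muA A →
      ‖A⁻¹‖ ≤ δ₀ →
      IntegrableOn (fun x => ‖φ x‖ * ‖NormedSpace.exp ((-(h x : ℂ)) • A)‖)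
        {x : ℝ | a < x ∧ (x : EReal) < b} := by
  have hπ := Real.pi_pos
  have hsin : 0 < Real.sin Δ := Real.sin_pos_of_pos_of_lt_pi hΔ (by linarith)
  set δ₀ : ℝ := η * Real.sin Δ / ω₀ with hδ₀
  have hδ₀pos : 0 < δ₀ := by positivity
  refine ⟨δ₀, hδ₀pos, fun A hsec hmuom hinv => ?_⟩
  set S : Set ℝ := {x : ℝ | a < x ∧ (x : EReal) < b} with hSdef
  have hSmeas : MeasurableSet S := by
    have : S = Set.Ioi a ∩ ((fun x : ℝ => (x : EReal)) ⁻¹' Set.Iio b) := rfl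
    rw [this]
    exact measurableSet_Ioi.inter (continuous_coe_real_ereal.measurable measurableSet_Iio)
  rcases Nat.eq_zero_or_pos m with hm | hm
  · subst hm
    have hzero : ∀ M : Mat 0, M = 0 := fun M => by
      ext i j
      exact absurd i.2 (by simp)
    have : (fun x => ‖φ x‖ * ‖NormedSpace.exp ((-(h x : ℂ)) • A)‖)
        = fun _ => (0 : ℝ) := by
      funext x
      rw [hzero (NormedSpace.exp ((-(h x : ℂ)) • A)), norm_zero, mul_zero]
    rw [this]
    exact integrableOn_zero
  -- now m > 0
  haveI : Nontrivial (Mat m) := by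
    refine ⟨1, 0, fun hcontra => ?_⟩
    have := congrFun (congrFun hcontra ⟨0, hm⟩) ⟨0, hm⟩
    simp at this
  -- Every spectral value has real part at least ω₀ / η.
  have hre : ∀ z ∈ spectrum ℂ A, ω₀ / η ≤ z.re := by
    intro z hz
    obtain ⟨hz0, harg⟩ := hsec z hz
    have hunit : IsUnit A := by
      refine spectrum.isUnit_of_zero_notMem (R := ℂ) fun h0 => ?_
      exact (hsec 0 h0).1 rfl
    have habs : δ₀⁻¹ ≤ ‖z‖ := by
      have hzu : IsUnit z := hz0.isUnit
      have hmem : (↑hzu.unit : ℂ) ∈ spectrum ℂ (↑hunit.unit : Mat m) := by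
        simpa [hzu.unit_spec, hunit.unit_spec] using hz
      have hinvmem := spectrum.inv_mem_iff.mp hmem
      have hAinv : ((↑hunit.unit⁻¹ : Mat m)) = A⁻¹ := by
        rw [Matrix.coe_units_inv, hunit.unit_spec]
      rw [hAinv] at hinvmem
      have hnorm : ‖(↑hzu.unit⁻¹ : ℂ)‖ ≤ ‖A⁻¹‖ := spectrum.norm_le_norm_of_mem hinvmem
      have hzinv : ‖(↑hzu.unit⁻¹ : ℂ)‖ = ‖z‖⁻¹ := by
        rw [← norm_inv]
        congr 1
        simp [hzu.unit_spec]
      rw [hzinv] at hnorm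
      have hzpos : (0:ℝ) < ‖z‖ := norm_pos_iff.mpr hz0
      have h1 : ‖z‖⁻¹ ≤ δ₀ := le_trans hnorm hinv
      have := inv_anti₀ (by positivity) h1
      simpa [inv_inv] using this.trans (le_of_eq (inv_inv ‖z‖))
    have hcos : Real.sin Δ ≤ Real.cos z.arg := by
      rw [← Real.cos_abs, ← Real.cos_pi_div_two_sub]
      exact Real.cos_le_cos_of_nonneg_of_le_pi (abs_nonneg _) (by linarith) harg
    have habs0 : (0:ℝ) < ‖z‖ := by
      simpa using norm_pos_iff.mpr hz0
    have hrecos : z.re = ‖z‖ * Real.cos z.arg := by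
      rw [Complex.cos_arg hz0]
      field_simp
    have hstep1 : ‖z‖ * Real.sin Δ ≤ z.re := by
      rw [hrecos]
      exact mul_le_mul_of_nonneg_left hcos habs0.le
    have hstep2 : δ₀⁻¹ * Real.sin Δ ≤ ‖z‖ * Real.sin Δ :=
      mul_le_mul_of_nonneg_right habs hsin.le
    have hδinv : δ₀⁻¹ * Real.sin Δ = ω₀ / η := by
      rw [hδ₀]
      field_simp
    linarith
  have homega : ω₀ / η ≤ omegaA A := by
    rw [omegaA]
    refine le_csInf ?_ ?_
    · exact (spectrum.nonempty A).image _
    · rintro _ ⟨z, hz, rfl⟩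
      exact hre z hz
  have hμω : ω₀ ≤ muA A := by
    have h1 : η * (ω₀ / η) ≤ η * omegaA A := mul_le_mul_of_nonneg_left homega hη.le
    have h2 : η * (ω₀ / η) = ω₀ := by field_simp
    linarith [hmuom]
  -- the bounding constant
  set ψ : ℝ → ℝ := fun t => ‖NormedSpace.exp ((-(t : ℂ)) • A)‖ with hψdef
  have hψcont : Continuous ψ := by
    have : Continuous fun t : ℝ => (-(t : ℂ)) • A :=
      ((Complex.continuous_ofReal.neg).smul continuous_const)
    letI hQ : NormedAlgebra ℚ (Mat m) := NormedAlgebra.restrictScalars ℚ ℂ (Mat m)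
    exact (NormedSpace.exp_continuous.comp this).norm
  set C : ℝ := ψ (h a) * Real.exp (ω₀ * h a) with hC
  -- pointwise bound on S
  have hbound : ∀ x ∈ S, ψ (h x) ≤ C * Real.exp (-ω₀ * h x) := by
    intro x hx
    have hxa : h a ≤ h x := (hi1 x hx.1 hx.2).le
    have h1 : ψ (h x) ≤ ψ (h a) * Real.exp (-((h x - h a) * muA A)) :=
      norm_exp_matrix_split A hxa
    have h2 : Real.exp (-((h x - h a) * muA A)) ≤ Real.exp (-((h x - h a) * ω₀)) := by
      apply Real.exp_le_exp.mpr
      have := mul_le_mul_of_nonneg_left hμω (sub_nonneg.mpr hxa)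
      linarith
    have h3 : ψ (h a) * Real.exp (-((h x - h a) * ω₀)) = C * Real.exp (-ω₀ * h x) := by
      rw [hC, mul_assoc, ← Real.exp_add]
      ring_nf
    calc ψ (h x) ≤ ψ (h a) * Real.exp (-((h x - h a) * muA A)) := h1
      _ ≤ ψ (h a) * Real.exp (-((h x - h a) * ω₀)) :=
          mul_le_mul_of_nonneg_left h2 (norm_nonneg _)
      _ = C * Real.exp (-ω₀ * h x) := h3
  -- integrable dominating functions
  have hp : IntegrableOn (fun x => ‖φ x‖ * Real.exp (-ω₀ * h x)) S := hiv ω₀ le_rfl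
  have hq : IntegrableOn (fun x => ‖φ x‖ * Real.exp (-(2 * ω₀) * h x)) S :=
    hiv (2 * ω₀) (by linarith)
  -- a.e.-measurability of the integrand, reconstructed from p and q
  set p : ℝ → ℝ := fun x => ‖φ x‖ * Real.exp (-ω₀ * h x) with hpdef
  set q : ℝ → ℝ := fun x => ‖φ x‖ * Real.exp (-(2 * ω₀) * h x) with hqdef
  set G : ℝ × ℝ → ℝ := fun uv =>
    if uv.1 = 0 then 0 else (uv.1 ^ 2 / uv.2) * ψ (Real.log (uv.1 / uv.2) / ω₀) with hGdef
  have hGmeas : Measurable G := by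
    refine Measurable.ite ?_ measurable_const ?_
    · exact measurable_fst (measurableSet_singleton 0)
    · exact ((measurable_fst.pow_const 2).div measurable_snd).mul
        (hψcont.measurable.comp ((Real.measurable_log.comp
          (measurable_fst.div measurable_snd)).div_const ω₀))
  have hkey : ∀ x : ℝ, ‖φ x‖ * ψ (h x) = G (p x, q x) := by
    intro x
    by_cases hφx : φ x = 0
    · simp [hGdef, hpdef, hφx]
    · have habs : (0:ℝ) < ‖φ x‖ := by
        simpa using norm_pos_iff.mpr hφx
      have hp0 : p x ≠ 0 := by positivity
      have hdiv : p x / q x = Real.exp (ω₀ * h x) := by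
        rw [hpdef, hqdef, mul_div_mul_left _ _ (ne_of_gt habs), ← Real.exp_sub]
        ring_nf
      have hsq : p x ^ 2 / q x = ‖φ x‖ := by
        rw [hpdef, hqdef]
        rw [mul_pow, ← Real.exp_nat_mul]
        have he2 : Real.exp ((2:ℕ) * (-ω₀ * h x)) = Real.exp (-(2 * ω₀) * h x) := by
          ring_nf
        rw [he2]
        have hq0 : Real.exp (-(2 * ω₀) * h x) ≠ 0 := Real.exp_ne_zero _
        field_simp
      rw [hGdef]
      simp only [if_neg hp0]
      rw [hdiv, Real.log_exp, hsq]
      congr 2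
      field_simp
  have hmeas : AEStronglyMeasurable
      (fun x => ‖φ x‖ * ‖NormedSpace.exp ((-(h x : ℂ)) • A)‖)
      (volume.restrict S) := by
    have hfun : (fun x => ‖φ x‖ * ‖NormedSpace.exp ((-(h x : ℂ)) • A)‖)
        = fun x => G (p x, q x) := funext fun x => hkey x
    rw [hfun]
    have hpm : AEMeasurable p (volume.restrict S) := hp.aestronglyMeasurable.aemeasurable
    have hqm : AEMeasurable q (volume.restrict S) := hq.aestronglyMeasurable.aemeasurable
    exact (hGmeas.comp_aemeasurable (hpm.prodMk hqm)).aestronglyMeasurable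
  -- conclude by domination
  have hCnonneg : 0 ≤ C := by
    rw [hC]
    positivity
  refine Integrable.mono' (hp.const_mul C) hmeas ?_
  filter_upwards [ae_restrict_mem hSmeas] with x hx
  have hψnn : 0 ≤ ψ (h x) := norm_nonneg _
  have habsnn : 0 ≤ ‖φ x‖ := norm_nonneg _
  rw [Real.norm_eq_abs, abs_of_nonneg (by positivity)]
  calc ‖φ x‖ * ψ (h x)
      ≤ ‖φ x‖ * (C * Real.exp (-ω₀ * h x)) := by
        gcongr
        exact hbound x hx
    _ = C * (‖φ x‖ * Real.exp (-ω₀ * h x)) := by ring
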